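/- Let C > 1 be real, let a = √(1 + 8/C), and let q* = (1/4)·[a + 1 - √(3 + 2a - a²)]. Then 3 + 2a - a² ≥ 0, q* ∈ (0,1), q* satisfies C²q*⁴ - C²q*³ - Cq* + 1 = 0, and q* is the unique root of the polynomial C²q⁴ - C²q³ - Cq + 1 in the interval [0,1]. -/

import Mathlib

open Real

set_option maxHeartbeats 1000000

theorem two_layer_threshold_root (C : ℝ) (hC : 1 < C) :
    0 ≤ 3 + 2 * Real.sqrt (1 + 8 / C) - Real.sqrt (1 + 8 / C) ^ 2 ∧
    (1 / 4) * (Real.sqrt (1 + 8 / C) + 1 -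
        Real.sqrt (3 + 2 * Real.sqrt (1 + 8 / C) - Real.sqrt (1 + 8 / C) ^ 2)) ∈
      Set.Ioo (0:ℝ) 1 ∧
    (C ^ 2 * ((1 / 4) * (Real.sqrt (1 + 8 / C) + 1 -
          Real.sqrt (3 + 2 * Real.sqrt (1 + 8 / C) - Real.sqrt (1 + 8 / C) ^ 2))) ^ 4 -
      C ^ 2 * ((1 / 4) * (Real.sqrt (1 + 8 / C) + 1 -
          Real.sqrt (3 + 2 * Real.sqrt (1 + 8 / C) - Real.sqrt (1 + 8 / C) ^ 2))) ^ 3 -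
      C * ((1 / 4) * (Real.sqrt (1 + 8 / C) + 1 -
          Real.sqrt (3 + 2 * Real.sqrt (1 + 8 / C) - Real.sqrt (1 + 8 / C) ^ 2))) + 1 = 0) ∧
    (∀ q ∈ Set.Icc (0:ℝ) 1, C ^ 2 * q ^ 4 - C ^ 2 * q ^ 3 - C * q + 1 = 0 →
      q = (1 / 4) * (Real.sqrt (1 + 8 / C) + 1 -
          Real.sqrt (3 + 2 * Real.sqrt (1 + 8 / C) - Real.sqrt (1 + 8 / C) ^ 2))) := by
  have hC0 : (0:ℝ) < C := lt_trans one_pos hC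
  set a := Real.sqrt (1 + 8 / C) with ha
  have h18 : (0:ℝ) < 1 + 8 / C := by positivity
  have ha2 : a ^ 2 = 1 + 8 / C := Real.sq_sqrt h18.le
  have ha0 : 0 ≤ a := Real.sqrt_nonneg _
  have hCa : C * (a ^ 2 - 1) = 8 := by
    rw [ha2]; field_simp; ring
  have h8C : 0 < 8 / C := by positivity
  have h8C8 : 8 / C < 8 := by
    rw [div_lt_iff₀ hC0]; nlinarith
  have ha1 : 1 < a := by nlinarith
  have ha3 : a < 3 := by nlinarith
  have hpos : 0 ≤ 3 + 2 * a - a ^ 2 := by nlinarith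
  set s := Real.sqrt (3 + 2 * a - a ^ 2) with hsdef
  have hs2 : s ^ 2 = 3 + 2 * a - a ^ 2 := Real.sq_sqrt hpos
  have hs0 : 0 ≤ s := Real.sqrt_nonneg _
  set q := (1 / 4) * (a + 1 - s) with hq
  have hslt : s < a + 1 := by
    have h1 : s ^ 2 < (a + 1) ^ 2 := by nlinarith
    exact lt_of_pow_lt_pow_left₀ 2 (by linarith) h1
  have hsgt : 3 - a < s := by
    have h1 : (3 - a) ^ 2 < s ^ 2 := by nlinarith
    nlinarith
  have hq0 : 0 < q := by rw [hq]; linarith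
  have hq1 : q < 1 := by rw [hq]; linarith
  have hroot2 : C * q ^ 2 - C * (a + 1) / 2 * q + 1 = 0 := by
    rw [hq]
    linear_combination (C / 16) * hs2 - (1 / 8) * hCa
  have hroot4 : C ^ 2 * q ^ 4 - C ^ 2 * q ^ 3 - C * q + 1 = 0 := by
    linear_combination (C * q ^ 2 + C * (a - 1) / 2 * q + 1) * hroot2 + (C * q ^ 2 / 4) * hCa
  refine ⟨hpos, ⟨hq0, hq1⟩, hroot4, ?_⟩
  intro q' hq' heq
  have hf : (C * q' ^ 2 + C * (a - 1) / 2 * q' + 1) *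
      (C * q' ^ 2 - C * (a + 1) / 2 * q' + 1) = 0 := by
    linear_combination heq - (C * q' ^ 2 / 4) * hCa
  have hf1 : 0 < C * q' ^ 2 + C * (a - 1) / 2 * q' + 1 := by
    have h0 := hq'.1
    nlinarith [mul_nonneg hC0.le (sq_nonneg q'),
      mul_nonneg (mul_nonneg hC0.le (by linarith : (0:ℝ) ≤ (a - 1) / 2)) h0]
  have hf2 : C * q' ^ 2 - C * (a + 1) / 2 * q' + 1 = 0 := by
    rcases mul_eq_zero.mp hf with h | h
    · exact absurd h (ne_of_gt hf1)
    · exact h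
  have key : (q' - q) * (C * (q' + q) - C * (a + 1) / 2) = 0 := by
    linear_combination hf2 - hroot2
  rcases mul_eq_zero.mp key with h | h
  · linarith [sub_eq_zero.mp h]
  · exfalso
    have hsum : q' + q = (a + 1) / 2 := by
      have h2 : C * (q' + q - (a + 1) / 2) = 0 := by linarith [h]
      have := mul_eq_zero.mp h2
      rcases this with h3 | h3
      · exact absurd h3 (ne_of_gt hC0)
      · linarith
    have h2 := hq'.2
    have h3 : q = 1 / 4 * (a + 1 - s) := hq
    linarith
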